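/- For coprime positive integers a and b, the map w ↦ b^{dim V^w}, where V is the reflection representation of S_a and V^w is the fixed subspace of w, is the character of a genuine representation of S_a; equivalently, for every w with c cycles, b^{c-1} is the value at w of a nonnegative integer combination of irreducible characters. -/

import Mathlib

/-- The number of cycles of a permutation, counting fixed points as 1-cycles. -/
noncomputable def cycleCount {n : ℕ} (w : Equiv.Perm (Fin n)) : ℕ :=
  w.cycleType.card + Set.ncard (Function.fixedPoints ⇑w)

open Equiv Equiv.Perm LinearMap

/-! ### Trace of a permutation operator -/

lemma trace_funLeft_perm {X : Type*} [Fintype X] [DecidableEq X] (e : Equiv.Perm X) :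
    LinearMap.trace ℂ (X → ℂ) (LinearMap.funLeft ℂ ℂ e) =
      (Finset.univ.filter fun x => e x = x).card := by
  classical
  rw [LinearMap.trace_eq_matrix_trace ℂ (Pi.basisFun ℂ X), Matrix.trace]
  simp only [Matrix.diag_apply, LinearMap.toMatrix_apply, Pi.basisFun_apply,
    LinearMap.funLeft_apply, Pi.basisFun_repr]
  rw [Finset.card_filter]
  push_cast
  refine Finset.sum_congr rfl fun x _ => ?_
  by_cases h : e x = x <;> simp [h, Pi.single_apply]

/-- The permutation representation on complex-valued functions on a `G`-set. -/
noncomputable def permRep (G : Type*) [Group G] (X : Type*) [MulAction G X] :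
    Representation ℂ G (X → ℂ) where
  toFun g := LinearMap.funLeft ℂ ℂ (fun x => g⁻¹ • x)
  map_one' := by ext f x; simp
  map_mul' g h := by ext f x; simp [mul_smul]

lemma permRep_char {G : Type} [Group G] {X : Type} [Fintype X] [DecidableEq X]
    [MulAction G X] (g : G) :
    (FDRep.of (permRep G X)).character g =
      (Nat.card {x : X // g • x = x} : ℂ) := by
  classical
  have : (FDRep.of (permRep G X)).character g
      = LinearMap.trace ℂ (X → ℂ) (LinearMap.funLeft ℂ ℂ
          ⇑(MulAction.toPerm (g⁻¹ : G) : Equiv.Perm X)) := rfl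
  rw [this, trace_funLeft_perm]
  rw [Nat.card_eq_fintype_card, Fintype.card_subtype]
  congr 2
  ext x
  simp [eq_comm, eq_inv_smul_iff]

/-! ### Counting invariant functions -/

variable {n : ℕ} (w : Equiv.Perm (Fin n))

/-- A function invariant under `w` is constant on cycles. -/
lemma const_on_cycles {β : Type*} {g : Fin n → β} (hg : ∀ x, g (w x) = g x)
    {x y : Fin n} (h : w.SameCycle x y) : g x = g y := by
  have hinv : ∀ x, g (w⁻¹ x) = g x := fun x => by
    conv_rhs => rw [← Equiv.apply_symm_apply w x, hg]
    rfl
  have key : ∀ (k : ℤ) (x : Fin n), g ((w ^ k) x) = g x := by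
    intro k
    induction k using Int.induction_on with
    | zero => intro x; simp
    | succ m ih => intro x
                   rw [add_comm, zpow_add, zpow_one, Equiv.Perm.mul_apply, hg, ih]
    | pred m ih => intro x
                   rw [show (-(m:ℤ) - 1) = (-1) + (-(m:ℤ)) by ring, zpow_add,
                     zpow_neg_one, Equiv.Perm.mul_apply, hinv, ih]
  obtain ⟨k, rfl⟩ := h
  exact (key k x).symm

/-- Functions invariant under `w` correspond to functions on the set of cycles. -/
noncomputable def invariantEquiv (β : Type*) :
    {g : Fin n → β // ∀ x, g (w x) = g x} ≃
      (Quotient (Equiv.Perm.SameCycle.setoid w) → β) where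
  toFun g := Quotient.lift g.1 (fun _ _ h => const_on_cycles w g.2 h)
  invFun h := ⟨fun x => h ⟦x⟧, fun x => by
    exact congrArg h (Quotient.sound
      (Equiv.Perm.sameCycle_apply_left.mpr (Equiv.Perm.SameCycle.refl w x)))⟩
  left_inv g := by ext x; rfl
  right_inv h := by ext ⟨x⟩; rfl

/-- The set of cycle-classes is the cycles plus the fixed points. -/
noncomputable def cyclesEquiv :
    Quotient (Equiv.Perm.SameCycle.setoid w) ≃
      ({c // c ∈ w.cycleFactorsFinset} ⊕ {x // x ∈ Function.fixedPoints ⇑w}) := by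
  classical
  refine Equiv.ofBijective (Quotient.lift (fun x =>
    if h : w x = x then Sum.inr ⟨x, h⟩ else
      Sum.inl ⟨w.cycleOf x, Equiv.Perm.cycleOf_mem_cycleFactorsFinset_iff.mpr
        (Equiv.Perm.mem_support.mpr h)⟩) ?_) ⟨?_, ?_⟩
  · rintro x y (hxy : w.SameCycle x y)
    by_cases hx : w x = x
    · obtain rfl : x = y := by
        obtain ⟨k, rfl⟩ := hxy
        exact (Equiv.Perm.zpow_apply_eq_self_of_apply_eq_self hx k).symm
      rfl
    · have hy : ¬ w y = y := by
        intro hy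
        obtain rfl : y = x := by
          obtain ⟨k, rfl⟩ := hxy.symm
          exact (Equiv.Perm.zpow_apply_eq_self_of_apply_eq_self hy k).symm
        exact hx hy
      simp only [dif_neg hx, dif_neg hy, Sum.inl.injEq, Subtype.mk.injEq]
      exact hxy.cycleOf_eq
  · intro q₁ q₂ hxy
    induction q₁ using Quotient.ind with | _ x => ?_
    induction q₂ using Quotient.ind with | _ y => ?_
    rw [Quotient.lift_mk, Quotient.lift_mk] at hxy
    rcases em (w x = x) with hx | hx <;> rcases em (w y = y) with hy | hy
    · simp only [dif_pos hx, dif_pos hy, Sum.inr.injEq, Subtype.mk.injEq] at hxy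
      exact congrArg _ (congrArg Subtype.val hxy)
    · simp only [dif_pos hx, dif_neg hy] at hxy
      exact absurd hxy (by simp)
    · simp only [dif_neg hx, dif_pos hy] at hxy
      exact absurd hxy (by simp)
    · simp only [dif_neg hx, dif_neg hy, Sum.inl.injEq, Subtype.mk.injEq] at hxy
      refine Quotient.sound ?_
      have hmem : y ∈ (w.cycleOf y).support := by
        rw [Equiv.Perm.mem_support_cycleOf_iff]
        exact ⟨Equiv.Perm.SameCycle.refl _ _, Equiv.Perm.mem_support.mpr hy⟩
      rw [← hxy, Equiv.Perm.mem_support_cycleOf_iff] at hmem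
      exact hmem.1
  · rintro (⟨c, hc⟩ | ⟨x, hx⟩)
    · obtain ⟨x, hx, -⟩ := (Equiv.Perm.mem_cycleFactorsFinset_iff.mp hc).1
      have hxs : x ∈ c.support := Equiv.Perm.mem_support.mpr hx
      have hcx : c = w.cycleOf x := Equiv.Perm.cycle_is_cycleOf hxs hc
      have hwx : ¬ w x = x := by
        have := (Equiv.Perm.mem_cycleFactorsFinset_iff.mp hc).2 x hxs
        rw [← this]; exact hx
      exact ⟨⟦x⟧, by simp [dif_neg hwx, ← hcx]⟩
    · exact ⟨⟦x⟧, dif_pos hx⟩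

lemma card_quotient_eq :
    Nat.card (Quotient (Equiv.Perm.SameCycle.setoid w)) = cycleCount w := by
  rw [Nat.card_congr (cyclesEquiv w), Nat.card_sum, cycleCount]
  rw [Nat.card_eq_finsetCard, Nat.card_coe_set_eq, Equiv.Perm.cycleType_def,
    Multiset.card_map, Finset.card]

/-- Counting invariant functions. -/
lemma card_invariant (b : ℕ) [NeZero b] :
    Nat.card {g : Fin n → ZMod b // ∀ x, g (w x) = g x} = b ^ cycleCount w := by
  rw [Nat.card_congr (invariantEquiv w (ZMod b)), Nat.card_fun, card_quotient_eq,
    Nat.card_zmod]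

/-- Splitting principle: a split surjection onto `ZMod b` divides the cardinality. -/
lemma card_split {b : ℕ} [NeZero b] {M : Type*} [AddCommGroup M] (S : M →+ ZMod b)
    (sec : ZMod b →+ M) (hsec : ∀ y, S (sec y) = y) :
    Nat.card M = Nat.card {m : M // S m = 0} * b := by
  have e : M ≃ {m : M // S m = 0} × ZMod b :=
    { toFun := fun m => (⟨m - sec (S m), by simp [hsec]⟩, S m)
      invFun := fun p => p.1.1 + sec p.2
      left_inv := fun m => by simp
      right_inv := fun p => by
        ext
        · simp [hsec, p.1.2]
        · simp [hsec, p.1.2] }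
  rw [Nat.card_congr e, Nat.card_prod, Nat.card_zmod]

section Okada

variable {a b : ℕ} [NeZero b] (w : Equiv.Perm (Fin a))

/-- The submodule of `w`-invariant functions. -/
def invSubmodule : Submodule (ZMod b) (Fin a → ZMod b) where
  carrier := {g | ∀ x, g (w x) = g x}
  add_mem' := fun hg hh x => by simp only [Pi.add_apply, hg x, hh x]
  zero_mem' := fun x => rfl
  smul_mem' := fun c g hg x => by simp only [Pi.smul_apply, hg x]

/-- The summation map on invariant functions. -/
def sumMap : (invSubmodule (b := b) w) →+ ZMod b where
  toFun g := ∑ i, g.1 i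
  map_zero' := by simp
  map_add' g h := by simp [Finset.sum_add_distrib]

/-- Counting invariant functions with zero sum. -/
lemma card_invariant_sum_zero (hab : Nat.Coprime a b) :
    Nat.card {g : invSubmodule (b := b) w // sumMap w g = 0} * b
      = b ^ cycleCount w := by
  classical
  set u : (ZMod b)ˣ := ZMod.unitOfCoprime a hab with hu_def
  have hu : (u : ZMod b) = (a : ZMod b) := ZMod.coe_unitOfCoprime a hab
  set sec : ZMod b →+ (invSubmodule (b := b) w) :=
    { toFun := fun y => ⟨fun _ => (u⁻¹ : (ZMod b)ˣ) * y, fun x => rfl⟩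
      map_zero' := by ext; simp
      map_add' := fun y z => by ext; simp [mul_add] } with hsec_def
  have hsec : ∀ y, sumMap w (sec y) = y := by
    intro y
    show (∑ _i : Fin a, ((u⁻¹ : (ZMod b)ˣ) : ZMod b) * y) = y
    rw [Finset.sum_const, Finset.card_univ, Fintype.card_fin, nsmul_eq_mul,
      ← mul_assoc, ← hu]
    norm_cast
    simp
  rw [← card_split (sumMap w) sec hsec]
  have : Nat.card (invSubmodule (b := b) w)
      = Nat.card {g : Fin a → ZMod b // ∀ x, g (w x) = g x} := rfl
  rw [this, card_invariant]

end Okada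

/-! ### The `S_a`-set of zero-sum functions -/

/-- Functions `Fin a → ZMod b` with zero sum. -/
def SumZero (a b : ℕ) : Type := {f : Fin a → ZMod b // ∑ i, f i = 0}

instance (a b : ℕ) [NeZero b] : Fintype (SumZero a b) := by
  unfold SumZero; infer_instance

instance (a b : ℕ) : DecidableEq (SumZero a b) := by
  unfold SumZero; infer_instance

instance (a b : ℕ) : SMul (Equiv.Perm (Fin a)) (SumZero a b) :=
  ⟨fun w f => ⟨fun x => f.1 (w⁻¹ x), by rw [Equiv.sum_comp w⁻¹ f.1]; exact f.2⟩⟩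

lemma smul_sumZero_apply {a b : ℕ} (w : Equiv.Perm (Fin a)) (f : SumZero a b) (x : Fin a) :
    (w • f).1 x = f.1 (w⁻¹ x) := rfl

instance (a b : ℕ) : MulAction (Equiv.Perm (Fin a)) (SumZero a b) where
  one_smul f := Subtype.ext (funext fun x => by simp [smul_sumZero_apply])
  mul_smul w₁ w₂ f := Subtype.ext (funext fun x => by
    simp [smul_sumZero_apply, mul_inv_rev, Equiv.Perm.mul_apply])

/-- The fixed points of `w` on `SumZero a b` are the zero-sum invariant functions. -/
def fixedSumZeroEquiv {a b : ℕ} (w : Equiv.Perm (Fin a)) :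
    {f : SumZero a b // w • f = f} ≃ {g : invSubmodule (b := b) w // sumMap w g = 0} where
  toFun f := ⟨⟨f.1.1, fun x => by
      have h := congrArg (fun g => g.1 (w x)) f.2
      simpa [smul_sumZero_apply] using h.symm⟩, f.1.2⟩
  invFun g := ⟨⟨g.1.1, g.2⟩, by
    refine Subtype.ext (funext fun x => ?_)
    change g.1.1 (w⁻¹ x) = g.1.1 x
    have := g.1.2 (w⁻¹ x)
    simpa using this.symm⟩
  left_inv f := rfl
  right_inv g := rfl

lemma one_le_cycleCount {a : ℕ} (ha : 0 < a) (w : Equiv.Perm (Fin a)) :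
    1 ≤ cycleCount w := by
  by_contra h
  push_neg at h
  rw [Nat.lt_one_iff, cycleCount, Nat.add_eq_zero] at h
  have hw : w = 1 := Equiv.Perm.card_cycleType_eq_zero.mp h.1
  subst hw
  have : Function.fixedPoints ⇑(1 : Equiv.Perm (Fin a)) = Set.univ := by
    ext x; simp [Function.fixedPoints, Function.IsFixedPt]
  rw [this, Set.ncard_univ, Nat.card_eq_fintype_card, Fintype.card_fin] at h
  omega

/-- Okada's theorem (the direction used in the paper): for coprime positive
integers `a` and `b`, the class function `w ↦ b^(dim V^w) = b^(c(w) - 1)` on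
`S_a` (where `V` is the reflection representation and `c(w)` the number of
cycles of `w`) is the character of a genuine finite-dimensional representation
of `S_a`. -/
theorem okada_character (a b : ℕ) (ha : 0 < a) (hb : 0 < b)
    (hab : Nat.Coprime a b) :
    ∃ V : FDRep ℂ (Equiv.Perm (Fin a)),
      ∀ w : Equiv.Perm (Fin a), V.character w = (b : ℂ) ^ (cycleCount w - 1) := by
  haveI : NeZero b := ⟨hb.ne'⟩
  refine ⟨FDRep.of (permRep (Equiv.Perm (Fin a)) (SumZero a b)), fun w => ?_⟩
  rw [permRep_char]
  have key : Nat.card {f : SumZero a b // w • f = f} * b = b ^ cycleCount w := by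
    rw [Nat.card_congr (fixedSumZeroEquiv w), card_invariant_sum_zero w hab]
  have hcc := one_le_cycleCount ha w
  have hN : Nat.card {f : SumZero a b // w • f = f} = b ^ (cycleCount w - 1) := by
    have : b ^ cycleCount w = b ^ (cycleCount w - 1) * b := by
      rw [← pow_succ, Nat.sub_add_cancel hcc]
    rw [this] at key
    exact Nat.eq_of_mul_eq_mul_right hb key
  rw [hN]
  push_cast
  ring
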